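/- For every k ∈ (0,1), the function K : (0,1) → ℝ, K(k) = ∫_0^{π/2} (1 - k² sin²u)^{-1/2} du, is differentiable at k with derivative K'(k) = E(k)/(k(1-k²)) - K(k)/k. -/

import Mathlib

open Real MeasureTheory intervalIntegral

lemma hdF (s : ℝ) (hs0 : 0 ≤ s) (hs1 : s ≤ 1) (x : ℝ) (hx : x^2 < 1) :
    HasDerivAt (fun y => 1 / Real.sqrt (1 - y^2 * s))
      (x * s / Real.sqrt (1 - x^2 * s) ^ 3) x := by
  have hw : 0 < 1 - x^2 * s := by nlinarith [sq_nonneg x]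
  have hts : 0 < Real.sqrt (1 - x^2 * s) := Real.sqrt_pos.2 hw
  have ht2 : Real.sqrt (1 - x^2 * s) ^ 2 = 1 - x^2 * s := Real.sq_sqrt hw.le
  have hinner : HasDerivAt (fun y : ℝ => 1 - y^2 * s) (-(2 * x * s)) x := by
    have h := ((hasDerivAt_pow 2 x).mul_const s).const_sub 1
    exact h.congr_deriv (by norm_num)
  have hsq : HasDerivAt (fun y : ℝ => Real.sqrt (1 - y^2 * s))
      (1 / (2 * Real.sqrt (1 - x^2 * s)) * (-(2 * x * s))) x :=
    (Real.hasDerivAt_sqrt hw.ne').comp x hinner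
  have h := hsq.inv hts.ne'
  have heq : (fun y => 1 / Real.sqrt (1 - y^2 * s)) = fun y => (Real.sqrt (1 - y^2 * s))⁻¹ := by
    funext y; rw [one_div]
  rw [heq]
  refine h.congr_deriv ?_
  field_simp

lemma hdg (k : ℝ) (hk2 : k^2 < 1) (u : ℝ) :
    HasDerivAt (fun u => Real.sin u * Real.cos u / Real.sqrt (1 - k^2 * Real.sin u ^ 2))
      ((1 - Real.sin u ^ 2) / Real.sqrt (1 - k^2 * Real.sin u ^ 2) ^ 3
        - Real.sin u ^ 2 / Real.sqrt (1 - k^2 * Real.sin u ^ 2)) u := by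
  have hs1 : Real.sin u ^ 2 ≤ 1 := Real.sin_sq_le_one u
  have hw : 0 < 1 - k^2 * Real.sin u ^ 2 := by nlinarith [sq_nonneg k, sq_nonneg (Real.sin u)]
  have hts : 0 < Real.sqrt (1 - k^2 * Real.sin u ^ 2) := Real.sqrt_pos.2 hw
  have ht2 : Real.sqrt (1 - k^2 * Real.sin u ^ 2) ^ 2 = 1 - k^2 * Real.sin u ^ 2 :=
    Real.sq_sqrt hw.le
  have hnum : HasDerivAt (fun u => Real.sin u * Real.cos u)
      (Real.cos u * Real.cos u + Real.sin u * (-Real.sin u)) u :=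
    (Real.hasDerivAt_sin u).mul (Real.hasDerivAt_cos u)
  have hinner : HasDerivAt (fun u : ℝ => 1 - k^2 * Real.sin u ^ 2)
      (-(k^2 * (2 * Real.sin u * Real.cos u))) u := by
    have h := (((Real.hasDerivAt_sin u).pow 2).const_mul (k^2)).const_sub 1
    exact h.congr_deriv (by norm_num)
  have hden : HasDerivAt (fun u : ℝ => Real.sqrt (1 - k^2 * Real.sin u ^ 2))
      (1 / (2 * Real.sqrt (1 - k^2 * Real.sin u ^ 2)) * (-(k^2 * (2 * Real.sin u * Real.cos u)))) u :=
    (Real.hasDerivAt_sqrt hw.ne').comp u hinner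
  have h := hnum.div hden hts.ne'
  refine h.congr_deriv ?_
  have hc : Real.cos u ^ 2 = 1 - Real.sin u ^ 2 := Real.cos_sq' u
  field_simp
  set t := Real.sqrt (1 - k^2 * Real.sin u ^ 2) with htdef
  set w := 1 - k^2 * Real.sin u ^ 2 with hwdef
  set s := Real.sin u with hsdef
  set c := Real.cos u with hcdef
  rw [Real.sq_sqrt (by rw [mul_comm]; exact hw.le)]
  congr 1
  linear_combination hc

/-- Complete elliptic integral of the first kind. -/
noncomputable def ellK (k : ℝ) : ℝ :=
  ∫ u in (0:ℝ)..(π/2), 1 / Real.sqrt (1 - k^2 * Real.sin u ^ 2)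

/-- Complete elliptic integral of the second kind. -/
noncomputable def ellE (k : ℝ) : ℝ :=
  ∫ u in (0:ℝ)..(π/2), Real.sqrt (1 - k^2 * Real.sin u ^ 2)

lemma cont_sqrtw (x : ℝ) : Continuous (fun u => Real.sqrt (1 - x^2 * Real.sin u ^ 2)) := by
  fun_prop

lemma sqrtw_pos (x : ℝ) (hx : x^2 < 1) (u : ℝ) : 0 < Real.sqrt (1 - x^2 * Real.sin u ^ 2) := by
  apply Real.sqrt_pos.2
  nlinarith [sq_nonneg x, sq_nonneg (Real.sin u), Real.sin_sq_le_one u]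

lemma cont_inv_sqrtw (x : ℝ) (hx : x^2 < 1) :
    Continuous (fun u => 1 / Real.sqrt (1 - x^2 * Real.sin u ^ 2)) :=
  continuous_const.div (cont_sqrtw x) fun u => (sqrtw_pos x hx u).ne'

theorem stmt_4 (k : ℝ) (hk : k ∈ Set.Ioo (0:ℝ) 1) :
    HasDerivAt ellK (ellE k / (k * (1 - k^2)) - ellK k / k) k := by
  obtain ⟨hk0, hk1⟩ := hk
  have hk2 : k^2 < 1 := by nlinarith
  have hkkpos : 0 < k * (1 - k^2) := by nlinarith
  have hkk : k * (1 - k^2) ≠ 0 := hkkpos.ne'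
  set m : ℝ := (1 + k) / 2 with hm
  have hm1 : m < 1 := by simp only [hm]; linarith
  have hm0 : 0 < m := by simp only [hm]; linarith
  have hkm : k < m := by simp only [hm]; linarith
  have hm2 : m^2 < 1 := by nlinarith
  set ε : ℝ := (1 - k) / 2 with hε
  have hε0 : 0 < ε := by simp only [hε]; linarith
  -- x in the ball has x^2 < m^2 < 1
  have hball : ∀ x ∈ Metric.ball k ε, x^2 < m^2 := by
    intro x hx
    rw [Metric.mem_ball, Real.dist_eq, abs_lt] at hx
    have h1 : x < m := by simp only [hm, hε] at hx ⊢; linarith [hx.2]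
    have h2 : -m < x := by simp only [hm, hε] at hx ⊢; linarith [hx.1, hk0]
    nlinarith
  -- step 1: differentiate under the integral sign
  set F' : ℝ → ℝ → ℝ := fun x u => x * Real.sin u ^ 2 / Real.sqrt (1 - x^2 * Real.sin u ^ 2) ^ 3
    with hF'
  have hderivF : ∀ (u : ℝ), ∀ x, x^2 < 1 →
      HasDerivAt (fun y => 1 / Real.sqrt (1 - y^2 * Real.sin u ^ 2)) (F' x u) x := by
    intro u x hx
    exact hdF (Real.sin u ^ 2) (sq_nonneg _) (Real.sin_sq_le_one u) x hx
  have contF' : ∀ x, x^2 < 1 → Continuous (F' x) := by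
    intro x hx
    apply Continuous.div (by fun_prop) (by fun_prop)
    intro u
    exact pow_ne_zero _ (sqrtw_pos x hx u).ne'
  have key : HasDerivAt (fun x => ∫ u in (0:ℝ)..(π/2), 1 / Real.sqrt (1 - x^2 * Real.sin u ^ 2))
      (∫ u in (0:ℝ)..(π/2), F' k u) k := by
    refine (intervalIntegral.hasDerivAt_integral_of_dominated_loc_of_deriv_le
      (F := fun x u => 1 / Real.sqrt (1 - x^2 * Real.sin u ^ 2)) (F' := F')
      (bound := fun _ => 1 / Real.sqrt (1 - m^2) ^ 3) (Metric.ball_mem_nhds k hε0) ?_ ?_ ?_ ?_ ?_ ?_).2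
    · filter_upwards [Metric.ball_mem_nhds k hε0] with x hx
      exact (cont_inv_sqrtw x (lt_trans (hball x hx) hm2)).aestronglyMeasurable
    · exact (cont_inv_sqrtw k hk2).intervalIntegrable _ _
    · exact ((contF' k hk2).aestronglyMeasurable).restrict
    · refine Filter.Eventually.of_forall fun u _ x hx => ?_
      have hx1 : x^2 < 1 := lt_trans (hball x hx) hm2
      have hw : 0 < 1 - x^2 * Real.sin u ^ 2 := by
        nlinarith [sq_nonneg x, sq_nonneg (Real.sin u), Real.sin_sq_le_one u]
      have hwm : 1 - m^2 ≤ 1 - x^2 * Real.sin u ^ 2 := by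
        nlinarith [Real.sin_sq_le_one u, sq_nonneg (Real.sin u), hball x hx]
      have hsm : Real.sqrt (1 - m^2) ≤ Real.sqrt (1 - x^2 * Real.sin u ^ 2) :=
        Real.sqrt_le_sqrt hwm
      have hsm0 : 0 < Real.sqrt (1 - m^2) := Real.sqrt_pos.2 (by nlinarith)
      have hs0 : 0 < Real.sqrt (1 - x^2 * Real.sin u ^ 2) := sqrtw_pos x hx1 u
      have hxle : |x| ≤ 1 := by
        rw [abs_le]; constructor <;> nlinarith [hball x hx]
      have hnum : |x| * Real.sin u ^ 2 ≤ 1 := by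
        calc |x| * Real.sin u ^ 2 ≤ 1 * 1 :=
              mul_le_mul hxle (Real.sin_sq_le_one u) (sq_nonneg _) zero_le_one
          _ = 1 := by ring
      rw [Real.norm_eq_abs, hF', abs_div, abs_of_pos (pow_pos hs0 3), abs_mul,
        abs_of_nonneg (sq_nonneg (Real.sin u))]
      calc |x| * Real.sin u ^ 2 / Real.sqrt (1 - x^2 * Real.sin u ^ 2) ^ 3
          ≤ 1 / Real.sqrt (1 - m^2) ^ 3 := by
            apply div_le_div₀ zero_le_one hnum (by positivity)
            exact pow_le_pow_left₀ hsm0.le hsm 3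
        _ = 1 / Real.sqrt (1 - m^2) ^ 3 := rfl
    · exact intervalIntegrable_const
    · refine Filter.Eventually.of_forall fun u _ x hx => ?_
      exact hderivF u x (lt_trans (hball x hx) hm2)
  -- step 2: compute the integral of F' k
  have hk2' : (0:ℝ) < 1 - k^2 := by nlinarith
  set G : ℝ → ℝ := fun u => (1 - Real.sin u ^ 2) / Real.sqrt (1 - k^2 * Real.sin u ^ 2) ^ 3
      - Real.sin u ^ 2 / Real.sqrt (1 - k^2 * Real.sin u ^ 2) with hG
  have contG : Continuous G := by
    apply Continuous.sub
    · exact Continuous.div (by fun_prop) (by fun_prop)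
        fun u => pow_ne_zero _ (sqrtw_pos k hk2 u).ne'
    · exact Continuous.div (by fun_prop) (by fun_prop) fun u => (sqrtw_pos k hk2 u).ne'
  have hGzero : (∫ u in (0:ℝ)..(π/2), G u) = 0 := by
    rw [intervalIntegral.integral_eq_sub_of_hasDerivAt (fun u _ => hdg k hk2 u)
      (contG.intervalIntegrable _ _)]
    simp [Real.cos_pi_div_two, Real.sin_zero]
  have hsplit : ∀ u, F' k u = (1/(k*(1-k^2))) * Real.sqrt (1 - k^2 * Real.sin u ^ 2)
      - (1/k) * (1 / Real.sqrt (1 - k^2 * Real.sin u ^ 2)) - (k/(1-k^2)) * G u := by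
    intro u
    have hw : 0 < 1 - k^2 * Real.sin u ^ 2 := by
      nlinarith [sq_nonneg (Real.sin u), Real.sin_sq_le_one u]
    have hts : 0 < Real.sqrt (1 - k^2 * Real.sin u ^ 2) := Real.sqrt_pos.2 hw
    have ht2 : Real.sqrt (1 - k^2 * Real.sin u ^ 2) ^ 2 = 1 - k^2 * Real.sin u ^ 2 :=
      Real.sq_sqrt hw.le
    rw [hF', hG]
    set t := Real.sqrt (1 - k^2 * Real.sin u ^ 2) with htdef
    set s := Real.sin u with hsdef
    have h1 : (0:ℝ) < 1 - k^2 := by nlinarith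
    field_simp
    rw [← hsdef, ← htdef]
    field_simp
    linear_combination (-(t^2+k^2)) * ht2
  have hintE : IntervalIntegrable (fun u => Real.sqrt (1 - k^2 * Real.sin u ^ 2))
      MeasureTheory.volume 0 (π/2) := (cont_sqrtw k).intervalIntegrable _ _
  have hintK : IntervalIntegrable (fun u => 1 / Real.sqrt (1 - k^2 * Real.sin u ^ 2))
      MeasureTheory.volume 0 (π/2) := (cont_inv_sqrtw k hk2).intervalIntegrable _ _
  have hval : (∫ u in (0:ℝ)..(π/2), F' k u)
      = ellE k / (k * (1 - k^2)) - ellK k / k := by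
    rw [intervalIntegral.integral_congr (fun u _ => hsplit u)]
    rw [intervalIntegral.integral_sub
      ((hintE.const_mul _).sub (hintK.const_mul _)) ((contG.intervalIntegrable _ _).const_mul _),
      intervalIntegral.integral_sub (hintE.const_mul _) (hintK.const_mul _),
      intervalIntegral.integral_const_mul, intervalIntegral.integral_const_mul,
      intervalIntegral.integral_const_mul, hGzero]
    rw [mul_zero, sub_zero, ellE, ellK]
    ring
  rw [← hval]
  show HasDerivAt (fun x => ∫ u in (0:ℝ)..(π/2), 1 / Real.sqrt (1 - x^2 * Real.sin u ^ 2)) _ k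
  exact key
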